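/- arXiv:1010.1229 — 4 statements merged into one kernel-verified Lean document; each statement's English description precedes it below -/
import Mathlib

section
/- Fix an integer d ≥ 1, real numbers 0 < ρ < 1, ζ > 0, a point y = (y₁, y₂) ∈ ℝ^d × ℝ^d, a point x₀ ∈ ℝ^d and a real ε with ε > ‖x₀ − y₁‖ + ζ/2. Let ψ : ℝ^d → ℝ^d be ρ-Lipschitz on the open ball B(x₀, ε). If there exists w₁ ∈ B(x₀, ε) such that ρ·‖w₁ − y₁‖ + ‖ψ(w₁) − y₂‖ < (1 − ρ)ζ/2 (i.e. the graph of ψ meets the unstable core of the rectangle R(y, ζ)), then the closed ball of radius ζ/2 around y₁ is contained in B(x₀, ε), and for every x ∈ ℝ^d with ‖x − y₁‖ ≤ ζ/2 one has ‖ψ(x) − y₂‖ < ζ/2. In particular, the intersection of the graph of ψ with R(y, ζ) contains the graph of a map from the closed ball of radius ζ/2 around y₁ into the open ball of radius ζ/2 around y₂ (the graph is connecting in R(y, ζ)). -/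
open Metric

/-- If the graph of a `ρ`-Lipschitz map `ψ` (an unstable manifold of size `ε`)
meets the unstable core of the rectangle `R((y₁,y₂), ζ)`, then it is connecting in
that rectangle: the closed ball of radius `ζ/2` around `y₁` lies in the domain ball
`B(x₀, ε)`, and over that closed ball the graph stays in the open ball of radius
`ζ/2` around `y₂`. -/
theorem connecting_of_meets_unstable_core
    (d : ℕ) (hd : 1 ≤ d) (ρ ζ : ℝ) (hρ0 : 0 < ρ) (hρ1 : ρ < 1) (hζ : 0 < ζ)
    (y₁ y₂ x₀ : EuclideanSpace ℝ (Fin d)) (ε : ℝ)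
    (hε : ‖x₀ - y₁‖ + ζ / 2 < ε)
    (ψ : EuclideanSpace ℝ (Fin d) → EuclideanSpace ℝ (Fin d))
    (hLip : ∀ a ∈ ball x₀ ε, ∀ b ∈ ball x₀ ε, ‖ψ a - ψ b‖ ≤ ρ * ‖a - b‖)
    (w₁ : EuclideanSpace ℝ (Fin d)) (hw₁ : w₁ ∈ ball x₀ ε)
    (hcore : ρ * ‖w₁ - y₁‖ + ‖ψ w₁ - y₂‖ < (1 - ρ) * ζ / 2) :
    closedBall y₁ (ζ / 2) ⊆ ball x₀ ε ∧
      ∀ x : EuclideanSpace ℝ (Fin d), ‖x - y₁‖ ≤ ζ / 2 → ‖ψ x - y₂‖ < ζ / 2 := by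
  have hsub : closedBall y₁ (ζ / 2) ⊆ ball x₀ ε := by
    intro x hx
    rw [mem_closedBall, dist_eq_norm] at hx
    rw [mem_ball, dist_eq_norm]
    calc ‖x - x₀‖ ≤ ‖x - y₁‖ + ‖y₁ - x₀‖ := norm_sub_le_norm_sub_add_norm_sub x y₁ x₀
    _ ≤ ζ / 2 + ‖x₀ - y₁‖ := by rw [norm_sub_rev y₁ x₀]; linarith
    _ < ε := by linarith
  refine ⟨hsub, fun x hx => ?_⟩
  have hxball : x ∈ ball x₀ ε := hsub (by rwa [mem_closedBall, dist_eq_norm])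
  have h1 : ‖ψ x - ψ w₁‖ ≤ ρ * ‖x - w₁‖ := hLip x hxball w₁ hw₁
  have h2 : ‖x - w₁‖ ≤ ‖x - y₁‖ + ‖w₁ - y₁‖ := by
    calc ‖x - w₁‖ ≤ ‖x - y₁‖ + ‖y₁ - w₁‖ := norm_sub_le_norm_sub_add_norm_sub x y₁ w₁
    _ = ‖x - y₁‖ + ‖w₁ - y₁‖ := by rw [norm_sub_rev y₁]
  calc ‖ψ x - y₂‖ ≤ ‖ψ x - ψ w₁‖ + ‖ψ w₁ - y₂‖ :=
        norm_sub_le_norm_sub_add_norm_sub _ _ _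
  _ ≤ ρ * (‖x - y₁‖ + ‖w₁ - y₁‖) + ‖ψ w₁ - y₂‖ := by
        have := mul_le_mul_of_nonneg_left h2 hρ0.le
        linarith [h1, this]
  _ < ρ * (ζ / 2) + (1 - ρ) * ζ / 2 := by
        have := mul_le_mul_of_nonneg_left hx hρ0.le
        nlinarith
  _ = ζ / 2 := by ring
end

section
/- Let X be a set, T : X → X a bijection, U ⊆ X a subset, and fix integers M ≥ 0 and k ≥ 0. For each integer m ≥ M + 1 let Y_m ⊆ U be a set such that every z ∈ Y_m satisfies: the number of integers i with 1 ≤ i ≤ m − M and T^{−i}(z) ∈ U is exactly k. Then the sets T^{−m}(Y_m), for m ≥ M + 1, are pairwise disjoint: if M + 1 ≤ m₁ < m₂, then T^{−m₁}(Y_{m₁}) ∩ T^{−m₂}(Y_{m₂}) = ∅. -/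
/-- Disjointness of the sets `T^{-m}(Y_m)`: if every point of `Y_m` makes exactly `k`
returns to `U` at the backward times `1, …, m − M`, then the sets `T^{-m}(Y_m)`,
`m ≥ M + 1`, are pairwise disjoint. -/
theorem preimages_pairwise_disjoint
    {X : Type*} (T : X ≃ X) (U : Set X) (M k : ℕ) (Y : ℕ → Set X)
    (hYU : ∀ m, M + 1 ≤ m → Y m ⊆ U)
    (hret : ∀ m, M + 1 ≤ m → ∀ z ∈ Y m,
      {i : ℕ | 1 ≤ i ∧ i ≤ m - M ∧ (⇑T.symm)^[i] z ∈ U}.ncard = k) :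
    ∀ m₁ m₂ : ℕ, M + 1 ≤ m₁ → m₁ < m₂ →
      ((⇑T.symm)^[m₁] '' Y m₁) ∩ ((⇑T.symm)^[m₂] '' Y m₂) = ∅ := by
  intro m₁ m₂ hm₁ hlt
  rw [Set.eq_empty_iff_forall_notMem]
  rintro x ⟨⟨z₁, hz₁, e₁⟩, ⟨z₂, hz₂, e₂⟩⟩
  set d := m₂ - m₁ with hd
  have hd1 : 1 ≤ d := by omega
  have hz : (⇑T.symm)^[d] z₂ = z₁ := by
    have h : (⇑T.symm)^[m₁] ((⇑T.symm)^[d] z₂) = (⇑T.symm)^[m₁] z₁ := by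
      rw [← Function.iterate_add_apply]
      have hmd : m₁ + d = m₂ := by omega
      rw [hmd, e₂, e₁]
    exact (T.symm.injective.iterate m₁) h
  have hS₁ := hret m₁ hm₁ z₁ hz₁
  have hS₂ := hret m₂ (by omega) z₂ hz₂
  set S₁ := {i : ℕ | 1 ≤ i ∧ i ≤ m₁ - M ∧ (⇑T.symm)^[i] z₁ ∈ U} with hS₁def
  set S₂ := {i : ℕ | 1 ≤ i ∧ i ≤ m₂ - M ∧ (⇑T.symm)^[i] z₂ ∈ U} with hS₂def
  have hsub : insert d ((· + d) '' S₁) ⊆ S₂ := by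
    rintro j hj
    rcases hj with rfl | ⟨i, ⟨hi1, hi2, hi3⟩, rfl⟩
    · exact ⟨hd1, by omega, hz ▸ hYU m₁ hm₁ hz₁⟩
    · refine ⟨?_, ?_, ?_⟩
      · show 1 ≤ i + d; omega
      · show i + d ≤ m₂ - M; omega
      · show (⇑T.symm)^[i + d] z₂ ∈ U
        rw [Function.iterate_add_apply, hz]
        exact hi3
  have hfin : S₂.Finite := (Set.finite_Icc 1 (m₂ - M)).subset (fun i hi => ⟨hi.1, hi.2.1⟩)
  have hS₁fin : S₁.Finite := (Set.finite_Icc 1 (m₁ - M)).subset (fun i hi => ⟨hi.1, hi.2.1⟩)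
  have hdnot : d ∉ (· + d) '' S₁ := by
    rintro ⟨i, ⟨hi1, _, _⟩, he⟩
    simp only at he
    omega
  have himg : ((· + d) '' S₁).ncard = k := by
    rw [Set.ncard_image_of_injective _ (add_left_injective d), hS₁]
  have hins : (insert d ((· + d) '' S₁)).ncard = k + 1 := by
    rw [Set.ncard_insert_of_notMem hdnot (hS₁fin.image _), himg]
  have hle := Set.ncard_le_ncard hsub hfin
  omega
end

section
/- Let (X, 𝒜, μ) be a measure space and T : X → X a measurable bijection with measurable inverse such that both T and T^{−1} preserve μ. Let U ⊆ X, and fix integers M ≥ 0 and k ≥ 0. For each integer m ≥ M + 1 let Y_m ⊆ U be a measurable set such that every z ∈ Y_m satisfies: the number of integers i with 1 ≤ i ≤ m − M and T^{−i}(z) ∈ U is exactly k. Then μ(⋃_{m ≥ M+1} Y_m) ≤ μ(⋃_{m ≥ M+1} T^{−m}(Y_m)). -/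
open MeasureTheory

/-- Measure estimate for the sets `Y^k_m`: if both `T` and `T⁻¹` preserve `μ` and every
point of `Y_m` makes exactly `k` returns to `U` at the backward times `1, …, m − M`,
then `μ(⋃_{m ≥ M+1} Y_m) ≤ μ(⋃_{m ≥ M+1} T^{-m}(Y_m))`. -/
theorem measure_iUnion_le_measure_iUnion_preimages
    {X : Type*} [MeasurableSpace X] (μ : Measure X) (T : X ≃ X)
    (hT : Measurable T) (hT' : Measurable T.symm)
    (hμT : MeasurePreserving T μ μ) (hμT' : MeasurePreserving T.symm μ μ)
    (U : Set X) (M k : ℕ) (Y : ℕ → Set X)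
    (hYmeas : ∀ m, M + 1 ≤ m → MeasurableSet (Y m))
    (hYU : ∀ m, M + 1 ≤ m → Y m ⊆ U)
    (hret : ∀ m, M + 1 ≤ m → ∀ z ∈ Y m,
      {i : ℕ | 1 ≤ i ∧ i ≤ m - M ∧ (⇑T.symm)^[i] z ∈ U}.ncard = k) :
    μ (⋃ (m : ℕ) (_ : M + 1 ≤ m), Y m) ≤
      μ (⋃ (m : ℕ) (_ : M + 1 ≤ m), (⇑T.symm)^[m] '' Y m) := by
  classical
  -- image under symm-iterate equals preimage under iterate
  have hpre : ∀ m, (⇑T.symm)^[m] '' Y m = (⇑T)^[m] ⁻¹' Y m := by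
    intro m
    ext x
    constructor
    · rintro ⟨y, hy, rfl⟩
      have h1 : (⇑T)^[m] ((⇑T.symm)^[m] y) = y := T.right_inv.iterate m y
      show (⇑T)^[m] ((⇑T.symm)^[m] y) ∈ Y m
      rw [h1]; exact hy
    · intro hx
      exact ⟨(⇑T)^[m] x, hx, T.left_inv.iterate m x⟩
  -- key contradiction lemma
  have hkey : ∀ m n, M + 1 ≤ m → M + 1 ≤ n → m < n →
      ∀ z' ∈ Y n, (⇑T.symm)^[n - m] z' ∈ Y m → False := by
    intro m n hm hn hmn z' hz' hz
    set d := n - m with hd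
    set z := (⇑T.symm)^[d] z' with hzdef
    have hS : {i : ℕ | 1 ≤ i ∧ i ≤ m - M ∧ (⇑T.symm)^[i] z ∈ U}.ncard = k :=
      hret m hm z hz
    have hS' : {i : ℕ | 1 ≤ i ∧ i ≤ n - M ∧ (⇑T.symm)^[i] z' ∈ U}.ncard = k :=
      hret n hn z' hz'
    set S := {i : ℕ | 1 ≤ i ∧ i ≤ m - M ∧ (⇑T.symm)^[i] z ∈ U} with hSdef
    set S' := {i : ℕ | 1 ≤ i ∧ i ≤ n - M ∧ (⇑T.symm)^[i] z' ∈ U} with hS'def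
    have hSfin : S.Finite := (Set.finite_Iic (m - M)).subset fun i hi => hi.2.1
    have hS'fin : S'.Finite := (Set.finite_Iic (n - M)).subset fun i hi => hi.2.1
    have hsub : insert d ((· + d) '' S) ⊆ S' := by
      intro i hi
      rcases hi with rfl | ⟨j, hj, rfl⟩
      · exact ⟨by omega, by omega, hYU m hm hz⟩
      · obtain ⟨hj1, hj2, hjU⟩ := hj
        show j + d ∈ S'
        refine ⟨by omega, by omega, ?_⟩
        have h2 : (⇑T.symm)^[j + d] z' = (⇑T.symm)^[j] z := by
          rw [Function.iterate_add_apply]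
        rw [h2]; exact hjU
    have himg : ((· + d) '' S).ncard = k := by
      rw [Set.ncard_image_of_injective _ (add_left_injective d)]; exact hS
    have hdnot : d ∉ (· + d) '' S := by
      rintro ⟨j, hj, hjd⟩
      have hj1 : (1 : ℕ) ≤ j := hj.1
      have hjd' : j + d = d := hjd
      omega
    have hins : (insert d ((· + d) '' S)).ncard = k + 1 := by
      rw [Set.ncard_insert_of_notMem hdnot (hSfin.image _), himg]
    have hle : (insert d ((· + d) '' S)).ncard ≤ S'.ncard :=
      Set.ncard_le_ncard hsub hS'fin
    omega
  -- the piecewise family of preimages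
  set Z : ℕ → Set X := fun m => if M + 1 ≤ m then (⇑T)^[m] ⁻¹' Y m else ∅ with hZdef
  have hZeq : ∀ m, M + 1 ≤ m → Z m = (⇑T)^[m] ⁻¹' Y m := fun m h => if_pos h
  have hZeq' : ∀ m, ¬ M + 1 ≤ m → Z m = ∅ := fun m h => if_neg h
  have hZmeas : ∀ m, MeasurableSet (Z m) := by
    intro m
    by_cases h : M + 1 ≤ m
    · rw [hZeq m h]; exact (hT.iterate m) (hYmeas m h)
    · rw [hZeq' m h]; exact MeasurableSet.empty
  have hZdisj : Pairwise (Function.onFun Disjoint Z) := by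
    have haux : ∀ m n, m < n → Disjoint (Z m) (Z n) := by
      intro m n hmn
      rw [Set.disjoint_left]
      intro x hxm hxn
      by_cases hm : M + 1 ≤ m
      · by_cases hn : M + 1 ≤ n
        · rw [hZeq m hm] at hxm
          rw [hZeq n hn] at hxn
          have hz' : (⇑T)^[n] x ∈ Y n := hxn
          have hz : (⇑T)^[m] x ∈ Y m := hxm
          have hiter : (⇑T)^[n] x = (⇑T)^[n - m] ((⇑T)^[m] x) := by
            rw [← Function.iterate_add_apply]
            congr 1
            omega
          have hback : (⇑T.symm)^[n - m] ((⇑T)^[n] x) = (⇑T)^[m] x := by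
            rw [hiter]
            exact T.left_inv.iterate (n - m) ((⇑T)^[m] x)
          exact hkey m n hm hn hmn ((⇑T)^[n] x) hz' (hback ▸ hz)
        · rw [hZeq' n hn] at hxn; exact Set.notMem_empty x hxn
      · rw [hZeq' m hm] at hxm; exact Set.notMem_empty x hxm
    intro m n hmn
    rcases lt_or_gt_of_ne hmn with h | h
    · exact haux m n h
    · exact (haux n m h).symm
  have hμeq : ∀ m, M + 1 ≤ m → μ ((⇑T)^[m] ⁻¹' Y m) = μ (Y m) := by
    intro m hm
    exact (hμT.iterate m).measure_preimage (hYmeas m hm).nullMeasurableSet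
  calc μ (⋃ (m : ℕ) (_ : M + 1 ≤ m), Y m)
      ≤ ∑' m, μ (⋃ (_ : M + 1 ≤ m), Y m) := measure_iUnion_le _
    _ = ∑' m, μ (Z m) := by
        refine tsum_congr fun m => ?_
        by_cases h : M + 1 ≤ m
        · rw [hZeq m h, hμeq m h]
          congr 1
          exact iSup_pos h
        · rw [hZeq' m h]
          congr 1
          simp [h]
    _ = μ (⋃ m, Z m) := (measure_iUnion hZdisj hZmeas).symm
    _ = μ (⋃ (m : ℕ) (_ : M + 1 ≤ m), (⇑T.symm)^[m] '' Y m) := by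
        congr 1
        ext x
        simp only [Set.mem_iUnion]
        constructor
        · rintro ⟨m, hm⟩
          by_cases h : M + 1 ≤ m
          · rw [hZeq m h] at hm
            exact ⟨m, h, by rw [hpre m]; exact hm⟩
          · rw [hZeq' m h] at hm; exact absurd hm (Set.notMem_empty x)
        · rintro ⟨m, h, hm⟩
          refine ⟨m, ?_⟩
          rw [hZeq m h, ← hpre m]
          exact hm
end

section
/- Let X be a topological space and μ a measure on the Borel σ-algebra of X that is positive on every nonempty open set. Let ι be an index type and (B_i)_{i ∈ ι} a family of sets with μ(B_i ∩ B_j) = 0 whenever i ≠ j. Let C ⊆ X be a preconnected set, let f : X → ι be a function, and suppose that every y ∈ C has an open neighborhood O_y with y ∈ O_y and μ(O_y \ B_{f(y)}) = 0. Then f is constant on C: for all y, z ∈ C one has f(y) = f(z). -/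
open MeasureTheory

/-- Connectedness argument: if `μ` is positive on nonempty open sets, the family
`(B i)` is almost-everywhere pairwise disjoint, and each point `y` of a preconnected
set `C` has an open neighborhood contained mod `μ`-zero in `B (f y)`, then `f` is
constant on `C`. -/
theorem constant_on_preconnected_of_local_mod_zero
    {X : Type*} [TopologicalSpace X] [MeasurableSpace X] [BorelSpace X]
    (μ : Measure X)
    (hpos : ∀ O : Set X, IsOpen O → O.Nonempty → 0 < μ O)
    {ι : Type*} (B : ι → Set X)
    (hdisj : ∀ i j : ι, i ≠ j → μ (B i ∩ B j) = 0)
    (C : Set X) (hC : IsPreconnected C) (f : X → ι)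
    (h : ∀ y ∈ C, ∃ O : Set X, IsOpen O ∧ y ∈ O ∧ μ (O \ B (f y)) = 0) :
    ∀ y ∈ C, ∀ z ∈ C, f y = f z := by
  intro y hy z hz
  by_contra hne
  choose O hOopen hOmem hOnull using h
  set U : Set X := ⋃ (w : C) (_ : f w = f y), O w w.2 with hU
  set V : Set X := ⋃ (w : C) (_ : f w ≠ f y), O w w.2 with hV
  have hUopen : IsOpen U := isOpen_iUnion fun w => isOpen_iUnion fun _ => hOopen _ _
  have hVopen : IsOpen V := isOpen_iUnion fun w => isOpen_iUnion fun _ => hOopen _ _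
  have hcover : C ⊆ U ∪ V := by
    intro x hx
    by_cases hfx : f x = f y
    · exact Or.inl (Set.mem_iUnion.2 ⟨⟨x, hx⟩, Set.mem_iUnion.2 ⟨hfx, hOmem x hx⟩⟩)
    · exact Or.inr (Set.mem_iUnion.2 ⟨⟨x, hx⟩, Set.mem_iUnion.2 ⟨hfx, hOmem x hx⟩⟩)
  have hyU : y ∈ C ∩ U :=
    ⟨hy, Set.mem_iUnion.2 ⟨⟨y, hy⟩, Set.mem_iUnion.2 ⟨rfl, hOmem y hy⟩⟩⟩
  have hzV : z ∈ C ∩ V :=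
    ⟨hz, Set.mem_iUnion.2 ⟨⟨z, hz⟩, Set.mem_iUnion.2 ⟨fun e => hne e.symm, hOmem z hz⟩⟩⟩
  obtain ⟨x, -, hxU, hxV⟩ := hC U V hUopen hVopen hcover ⟨y, hyU⟩ ⟨z, hzV⟩
  obtain ⟨w, hw⟩ := Set.mem_iUnion.1 hxU
  obtain ⟨hfw, hxO⟩ := Set.mem_iUnion.1 hw
  obtain ⟨w', hw'⟩ := Set.mem_iUnion.1 hxV
  obtain ⟨hfw', hxO'⟩ := Set.mem_iUnion.1 hw'
  have hpos' : 0 < μ (O w w.2 ∩ O w' w'.2) :=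
    hpos _ ((hOopen _ _).inter (hOopen _ _)) ⟨x, hxO, hxO'⟩
  have hsub : O w w.2 ∩ O w' w'.2 ⊆
      (B (f w) ∩ B (f w')) ∪ (O w w.2 \ B (f w)) ∪ (O w' w'.2 \ B (f w')) := by
    intro a ⟨ha, ha'⟩
    by_cases h1 : a ∈ B (f w)
    · by_cases h2 : a ∈ B (f w')
      · exact Or.inl (Or.inl ⟨h1, h2⟩)
      · exact Or.inr ⟨ha', h2⟩
    · exact Or.inl (Or.inr ⟨ha, h1⟩)
  have hzero : μ (O w w.2 ∩ O w' w'.2) = 0 := by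
    refine measure_mono_null hsub ?_
    refine measure_union_null (measure_union_null ?_ (hOnull _ _)) (hOnull _ _)
    exact hdisj _ _ (by rw [hfw]; exact fun e => hfw' e.symm)
  exact hpos'.ne' hzero
end
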